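/- Let b : ℝ^m → ℝ be a smooth function equal to 1 outside some compact set, and set Y = b⁻¹({0}) ∪ {0}. Let H : ℝ^m → ℝ be a compactly supported smooth function with H(x) = 1 for every x in closure({x : b(x) ≠ 1}) ∪ {0}. Then the closure, with respect to the supremum norm, of the set {x ↦ b(x)²·a(x) + λ·H(x) : a ∈ C_c^∞(ℝ^m) with a(0) = 0, λ ∈ ℂ} inside C₀(ℝ^m) is exactly {f ∈ C₀(ℝ^m) : f is constant on Y}, i.e. {f ∈ C₀(ℝ^m) : f(x) = f(y) for all x, y ∈ Y}. -/

import Mathlib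

open Metric Set Function MeasureTheory Filter
open scoped Convolution Topology Manifold ZeroAtInfty

lemma smooth_approx_aux {m : ℕ} {g : EuclideanSpace ℝ (Fin m) → ℂ} (hg : Continuous g)
    (hgz : Tendsto g (cocompact (EuclideanSpace ℝ (Fin m))) (𝓝 0)) {ε : ℝ} (hε : 0 < ε) :
    ∃ ψ : EuclideanSpace ℝ (Fin m) → ℂ, ContDiff ℝ (⊤ : ℕ∞) ψ ∧ HasCompactSupport ψ ∧
      ∀ x, ‖g x - ψ x‖ ≤ ε := by
  obtain ⟨K, hK, hKg⟩ := mem_cocompact.mp (hgz (Metric.ball_mem_nhds 0 (half_pos hε)))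
  obtain ⟨R, hR⟩ := hK.isBounded.subset_closedBall 0
  set R' : ℝ := max R 0 + 1 with hR'
  have hR'pos : 0 < R' := by positivity
  let φ₀ : ContDiffBump (0 : EuclideanSpace ℝ (Fin m)) :=
    ⟨R', R' + 1, hR'pos, by linarith⟩
  set h : EuclideanSpace ℝ (Fin m) → ℂ := fun x => (φ₀ x : ℂ) * g x with hh
  have hhc : Continuous h := (Complex.continuous_ofReal.comp φ₀.continuous).mul hg
  have hsub : support h ⊆ support (fun x => φ₀ x) := by
    intro x hx
    simp only [hh, mem_support, ne_eq] at hx ⊢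
    intro h0
    exact hx (by rw [h0, Complex.ofReal_zero, zero_mul])
  have hhsupp : HasCompactSupport h := φ₀.hasCompactSupport.mono hsub
  have hgh : ∀ x, ‖g x - h x‖ ≤ ε / 2 := by
    intro x
    by_cases hx : x ∈ K
    · have hx' : x ∈ closedBall (0 : EuclideanSpace ℝ (Fin m)) R' :=
        closedBall_subset_closedBall (by simp [hR']; linarith [le_max_left R 0]) (hR hx)
      have : φ₀ x = 1 := φ₀.one_of_mem_closedBall hx'
      simp [hh, this]
      positivity
    · have hgx : ‖g x‖ < ε / 2 := by simpa [dist_eq_norm] using hKg (Set.mem_compl hx)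
      have : g x - h x = (1 - (φ₀ x : ℂ)) * g x := by simp only [hh]; ring
      rw [this, norm_mul]
      have h01 : ‖(1 : ℂ) - (φ₀ x : ℂ)‖ ≤ 1 := by
        rw [show (1 : ℂ) - (φ₀ x : ℂ) = ((1 - φ₀ x : ℝ) : ℂ) by push_cast; ring]
        rw [Complex.norm_real, Real.norm_eq_abs, abs_le]
        constructor <;> nlinarith [φ₀.nonneg' x, φ₀.le_one (x := x)]
      nlinarith [norm_nonneg (g x), norm_nonneg ((1:ℂ) - (φ₀ x : ℂ))]
  have huc : UniformContinuous h :=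
    hhc.uniformContinuous_of_tendsto_cocompact hhsupp.is_zero_at_infty
  obtain ⟨δ, hδpos, hδ⟩ := Metric.uniformContinuous_iff.mp huc (ε / 2) (half_pos hε)
  let φ : ContDiffBump (0 : EuclideanSpace ℝ (Fin m)) :=
    ⟨δ / 2, δ, half_pos hδpos, half_lt_self hδpos⟩
  set ψ : EuclideanSpace ℝ (Fin m) → ℂ :=
    φ.normed volume ⋆[ContinuousLinearMap.lsmul ℝ ℝ, volume] h with hψ
  have hψsmooth : ContDiff ℝ (⊤ : ℕ∞) ψ :=
    HasCompactSupport.contDiff_convolution_left _ φ.hasCompactSupport_normed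
      φ.contDiff_normed (hhc.locallyIntegrable)
  have hψsupp : HasCompactSupport ψ :=
    HasCompactSupport.convolution (L := ContinuousLinearMap.lsmul ℝ ℝ) (μ := volume)
      φ.hasCompactSupport_normed hhsupp
  refine ⟨ψ, hψsmooth, hψsupp, fun x => ?_⟩
  have h1 : dist (ψ x) (h x) ≤ ε / 2 := by
    apply φ.dist_normed_convolution_le hhc.aestronglyMeasurable
    intro y hy
    exact (hδ (by simpa [dist_comm] using hy)).le
  calc ‖g x - ψ x‖ ≤ ‖g x - h x‖ + ‖h x - ψ x‖ := by
        simpa using norm_sub_le_norm_sub_add_norm_sub (g x) (h x) (ψ x)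
    _ ≤ ε / 2 + ε / 2 := add_le_add (hgh x) (by rwa [← dist_eq_norm, dist_comm])
    _ = ε := by ring

lemma smooth_cutoff_aux {m : ℕ} {s t : Set (EuclideanSpace ℝ (Fin m))} (hs : IsClosed s)
    (ht : IsClosed t) (hd : Disjoint s t) :
    ∃ χ : EuclideanSpace ℝ (Fin m) → ℝ, ContDiff ℝ (⊤ : ℕ∞) χ ∧ (∀ᶠ x in 𝓝ˢ s, χ x = 0) ∧
      Set.EqOn χ 1 t ∧ ∀ x, χ x ∈ Set.Icc (0:ℝ) 1 := by
  obtain ⟨f, h0, h1, h01⟩ :=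
    exists_contMDiffMap_zero_one_nhds_of_isClosed (𝓘(ℝ, EuclideanSpace ℝ (Fin m)))
      (n := (⊤ : ℕ∞)) hs ht hd
  refine ⟨f, contMDiff_iff_contDiff.mp f.contMDiff, h0,
    fun x hx => h1.self_of_nhdsSet x hx, h01⟩

theorem closure_of_bab_plus_H_eq_functions_constant_on_Y
    {m : ℕ} (b : EuclideanSpace ℝ (Fin m) → ℝ)
    (hb : ContDiff ℝ (⊤ : ℕ∞) b)
    (hb1 : ∃ K : Set (EuclideanSpace ℝ (Fin m)), IsCompact K ∧ ∀ x ∉ K, b x = 1)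
    (H : EuclideanSpace ℝ (Fin m) → ℝ) (hH : ContDiff ℝ (⊤ : ℕ∞) H)
    (hHc : HasCompactSupport H)
    (hH1 : ∀ x ∈ closure {x | b x ≠ 1} ∪ ({0} : Set (EuclideanSpace ℝ (Fin m))),
      H x = 1) :
    closure {f : C₀(EuclideanSpace ℝ (Fin m), ℂ) |
        ∃ (a : EuclideanSpace ℝ (Fin m) → ℂ) (lam : ℂ),
          ContDiff ℝ (⊤ : ℕ∞) a ∧ HasCompactSupport a ∧ a 0 = 0 ∧
          ∀ x, f x = (↑(b x) : ℂ) ^ 2 * a x + lam * (↑(H x) : ℂ)}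
      = {f : C₀(EuclideanSpace ℝ (Fin m), ℂ) |
          ∀ x ∈ b ⁻¹' {0} ∪ ({0} : Set (EuclideanSpace ℝ (Fin m))),
          ∀ y ∈ b ⁻¹' {0} ∪ ({0} : Set (EuclideanSpace ℝ (Fin m))),
            f x = f y} := by
  classical
  set Y : Set (EuclideanSpace ℝ (Fin m)) := b ⁻¹' {0} ∪ {0} with hYdef
  -- H = 1 on Y
  have hHY : ∀ z ∈ Y, H z = 1 := by
    rintro z (hz | hz)
    · exact hH1 z (Or.inl (subset_closure (by
        simp only [Set.mem_setOf_eq]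
        simp only [Set.mem_preimage, Set.mem_singleton_iff] at hz
        rw [hz]; norm_num)))
    · exact hH1 z (Or.inr hz)
  have h0Y : (0 : EuclideanSpace ℝ (Fin m)) ∈ Y := Or.inr rfl
  have heval : ∀ x : EuclideanSpace ℝ (Fin m),
      Continuous fun f : C₀(EuclideanSpace ℝ (Fin m), ℂ) => f x := by
    intro x
    refine (LipschitzWith.of_dist_le_mul (K := 1) fun f g => ?_).continuous
    rw [NNReal.coe_one, one_mul, ← ZeroAtInftyContinuousMap.dist_toBCF_eq_dist]
    exact BoundedContinuousFunction.dist_coe_le_dist (f := f.toBCF) (g := g.toBCF) x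
  apply Set.Subset.antisymm
  · apply closure_minimal
    · rintro f ⟨a, lam, ha, hac, ha0, hf⟩
      have key : ∀ z ∈ Y, f z = lam := by
        intro z hz
        have hHz : H z = 1 := hHY z hz
        rcases hz with hz | hz
        · simp only [Set.mem_preimage, Set.mem_singleton_iff] at hz
          rw [hf z, hz, hHz]
          push_cast
          ring
        · simp only [Set.mem_singleton_iff] at hz
          subst hz
          rw [hf 0, ha0, hHz]
          push_cast
          ring
      intro x hx y hy
      rw [key x hx, key y hy]
    · have hrw : {f : C₀(EuclideanSpace ℝ (Fin m), ℂ) |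
          ∀ x ∈ Y, ∀ y ∈ Y, f x = f y}
          = ⋂ x ∈ Y, ⋂ y ∈ Y, {f : C₀(EuclideanSpace ℝ (Fin m), ℂ) | f x = f y} := by
        ext f
        simp only [Set.mem_setOf_eq, Set.mem_iInter]
      rw [hrw]
      exact isClosed_biInter fun x _ => isClosed_biInter fun y _ =>
        isClosed_eq (heval x) (heval y)
  · intro f hf
    simp only [Set.mem_setOf_eq] at hf
    set lam : ℂ := f 0 with hlam
    have hfY : ∀ z ∈ Y, f z = lam := fun z hz => hf z hz 0 h0Y
    set g : EuclideanSpace ℝ (Fin m) → ℂ := fun x => f x - lam * (H x : ℂ) with hgdef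
    have hgc : Continuous g :=
      (map_continuous f).sub (continuous_const.mul (Complex.continuous_ofReal.comp hH.continuous))
    have hlamH : HasCompactSupport (fun x => lam * (H x : ℂ)) := by
      apply hHc.mono
      intro x hx
      simp only [mem_support, ne_eq] at hx ⊢
      intro h0
      exact hx (by rw [h0, Complex.ofReal_zero, mul_zero])
    have hgz : Tendsto g (cocompact (EuclideanSpace ℝ (Fin m))) (𝓝 0) := by
      have := (zero_at_infty f).sub hlamH.is_zero_at_infty
      simpa using this
    have hgY : ∀ z ∈ Y, g z = 0 := by
      intro z hz
      simp only [hgdef]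
      rw [hfY z hz, hHY z hz]
      simp
    rw [Metric.mem_closure_iff]
    intro ε hε
    have hε4 : 0 < ε / 4 := by positivity
    obtain ⟨ψ, hψs, hψc, hψe⟩ := smooth_approx_aux hgc hgz hε4
    set U : Set (EuclideanSpace ℝ (Fin m)) := {x | ‖g x‖ < ε / 4} with hUdef
    have hUopen : IsOpen U := isOpen_lt (hgc.norm) continuous_const
    have hYU : Y ⊆ U := fun z hz => by
      simp only [hUdef, Set.mem_setOf_eq, hgY z hz, norm_zero]; exact hε4
    have hYclosed : IsClosed Y :=
      (isClosed_singleton.preimage hb.continuous).union isClosed_singleton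
    obtain ⟨χ, hχs, hχ0, hχ1, hχ01⟩ := smooth_cutoff_aux hYclosed hUopen.isClosed_compl
      (Set.disjoint_left.mpr fun z hz hz' => hz' (hYU hz))
    obtain ⟨V, hVopen, hYV, hχV⟩ := eventually_nhdsSet_iff_exists.mp hχ0
    set p : EuclideanSpace ℝ (Fin m) → ℂ := fun x => ψ x * (χ x : ℂ) with hpdef
    have hps : ContDiff ℝ (⊤ : ℕ∞) p :=
      hψs.mul (Complex.ofRealCLM.contDiff.comp hχs)
    have hpV : ∀ x ∈ V, p x = 0 := fun x hx => by
      simp only [hpdef, hχV x hx, Complex.ofReal_zero, mul_zero]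
    set a : EuclideanSpace ℝ (Fin m) → ℂ := fun x => p x / ((b x : ℂ) ^ 2) with hadef
    have hb2a : ∀ x, (b x : ℂ) ^ 2 * a x = p x := by
      intro x
      by_cases hbx : b x = 0
      · have hxV : x ∈ V := hYV (Or.inl (by simp [hbx]))
        simp [hadef, hbx, hpV x hxV]
      · have hne : (b x : ℂ) ^ 2 ≠ 0 := pow_ne_zero 2 (Complex.ofReal_ne_zero.mpr hbx)
        rw [hadef, mul_comm]
        exact div_mul_cancel₀ (p x) hne
    have has : ContDiff ℝ (⊤ : ℕ∞) a := by
      rw [contDiff_iff_contDiffAt]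
      intro x
      rw [hadef]
      by_cases hbx : b x = 0
      · have hxV : x ∈ V := hYV (Or.inl (by simp [hbx]))
        have hev : (fun y => p y / ((b y : ℂ) ^ 2)) =ᶠ[𝓝 x] fun _ => (0 : ℂ) := by
          filter_upwards [hVopen.mem_nhds hxV] with y hy
          simp [hpV y hy]
        exact (contDiffAt_const (c := (0:ℂ))).congr_of_eventuallyEq hev
      · have hden : ContDiffAt ℝ (⊤ : ℕ∞) (fun y : EuclideanSpace ℝ (Fin m) => ((b y : ℂ)) ^ 2) x :=
          (((Complex.ofRealCLM.contDiff.comp hb).pow 2).contDiffAt)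
        have hne : ((b x : ℂ)) ^ 2 ≠ 0 := pow_ne_zero 2 (Complex.ofReal_ne_zero.mpr hbx)
        simp only [div_eq_mul_inv]
        exact hps.contDiffAt.mul (hden.inv hne)
    have hasupp : HasCompactSupport a := by
      apply hψc.mono
      intro x hx
      simp only [mem_support, ne_eq] at hx ⊢
      intro h0
      exact hx (by simp [hadef, hpdef, h0])
    have ha0 : a 0 = 0 := by simp [hadef, hpV 0 (hYV h0Y)]
    -- the approximating element
    set sfun : EuclideanSpace ℝ (Fin m) → ℂ := fun x => p x + lam * (H x : ℂ) with hsfun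
    have hscont : Continuous sfun :=
      (hps.continuous).add (continuous_const.mul (Complex.continuous_ofReal.comp hH.continuous))
    have hpsupp : HasCompactSupport p := by
      apply hψc.mono
      intro x hx
      simp only [mem_support, ne_eq] at hx ⊢
      intro h0
      exact hx (by simp [hpdef, h0])
    have hssupp : HasCompactSupport sfun := hpsupp.add hlamH
    set s : C₀(EuclideanSpace ℝ (Fin m), ℂ) :=
      ⟨⟨sfun, hscont⟩, hssupp.is_zero_at_infty⟩ with hs
    refine ⟨s, ⟨a, lam, has, hasupp, ha0, fun x => ?_⟩, ?_⟩
    · show sfun x = (b x : ℂ) ^ 2 * a x + lam * (H x : ℂ)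
      rw [hb2a x]
    · -- distance estimate
      have hbd : ∀ x, dist (f x) (s x) ≤ 3 * (ε / 4) := by
        intro x
        have hfs : f x - s x = g x - p x := by
          show f x - sfun x = g x - p x
          simp only [hgdef, hsfun]
          ring
        rw [dist_eq_norm, hfs]
        by_cases hxU : x ∈ U
        · have hgx : ‖g x‖ < ε / 4 := hxU
          have hχle : ‖(χ x : ℂ)‖ ≤ 1 := by
            rw [Complex.norm_real, Real.norm_eq_abs, abs_le]
            exact ⟨by linarith [(hχ01 x).1], (hχ01 x).2⟩
          have hψx : ‖ψ x‖ ≤ ε / 4 + ε / 4 := by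
            calc ‖ψ x‖ ≤ ‖ψ x - g x‖ + ‖g x‖ := by
                  simpa using norm_add_le (ψ x - g x) (g x)
              _ ≤ ε / 4 + ε / 4 := add_le_add (by rw [norm_sub_rev]; exact hψe x) hgx.le
          have hpx : ‖p x‖ ≤ ε / 4 + ε / 4 := by
            rw [hpdef]
            calc ‖ψ x * (χ x : ℂ)‖ = ‖ψ x‖ * ‖(χ x : ℂ)‖ := norm_mul _ _
              _ ≤ (ε / 4 + ε / 4) * 1 :=
                  mul_le_mul hψx hχle (norm_nonneg _) (by positivity)
              _ = ε / 4 + ε / 4 := mul_one _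
          calc ‖g x - p x‖ ≤ ‖g x‖ + ‖p x‖ := norm_sub_le _ _
            _ ≤ ε / 4 + (ε / 4 + ε / 4) := add_le_add hgx.le hpx
            _ = 3 * (ε / 4) := by ring
        · have hχx : χ x = 1 := hχ1 hxU
          have : p x = ψ x := by simp [hpdef, hχx]
          rw [this, norm_sub_rev, norm_sub_rev] at *
          calc ‖g x - ψ x‖ ≤ ε / 4 := hψe x
            _ ≤ 3 * (ε / 4) := by linarith
      have : dist f s ≤ 3 * (ε / 4) := by
        rw [← ZeroAtInftyContinuousMap.dist_toBCF_eq_dist]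
        exact (BoundedContinuousFunction.dist_le (by positivity)).mpr hbd
      linarith
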